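/- Let $G_1,G_2$ be connected graphs on $[m]$ and $[n]$. The binomial edge ideal $J_{G_1,G_2}$ is a prime ideal if and only if both $G_1$ and $G_2$ are complete graphs. -/

import Mathlib

open MvPolynomial


/-- The binomial edge ideal of a pair of graphs. -/
noncomputable def pairIdeal (K : Type) [Field K] {α β : Type}
    (G1 : SimpleGraph α) (G2 : SimpleGraph β) : Ideal (MvPolynomial (α × β) K) :=
  Ideal.span {p | ∃ i j k l, G1.Adj i j ∧ G2.Adj k l ∧
    p = X (i, k) * X (j, l) - X (i, l) * X (j, k)}

lemma gen_mem (K : Type) [Field K] {α β : Type} (G1 : SimpleGraph α) (G2 : SimpleGraph β)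
    {i j : α} {k l : β} (h1 : G1.Adj i j) (h2 : G2.Adj k l) :
    X (i, k) * X (j, l) - X (i, l) * X (j, k) ∈ pairIdeal K G1 G2 :=
  Ideal.subset_span ⟨i, j, k, l, h1, h2, rfl⟩

lemma pairIdeal_le_ker (K : Type) [Field K] {α β : Type} (G1 : SimpleGraph α)
    (G2 : SimpleGraph β) {S : Type} [CommRing S] [Algebra K S]
    (f : α × β → S)
    (h : ∀ i j k l, G1.Adj i j → G2.Adj k l →
      f (i, k) * f (j, l) - f (i, l) * f (j, k) = 0) :
    pairIdeal K G1 G2 ≤ RingHom.ker (aeval f : MvPolynomial (α × β) K →ₐ[K] S) := by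
  rw [pairIdeal, Ideal.span_le]
  rintro p ⟨i, j, k, l, h1, h2, rfl⟩
  simp [RingHom.mem_ker, h i j k l h1 h2]

lemma indicator_ker (K : Type) [Field K] {α β : Type} [DecidableEq α] [DecidableEq β]
    (G1 : SimpleGraph α) (G2 : SimpleGraph β) {i j : α} {k l : β}
    (hne : ¬(G1.Adj i j ∧ G2.Adj k l)) :
    pairIdeal K G1 G2 ≤ RingHom.ker
      (aeval (fun v : α × β => if v = (i, k) ∨ v = (j, l) then (1:K) else 0) :
        MvPolynomial (α × β) K →ₐ[K] K) := by
  have main : ∀ (a b : α) (c d : β), G1.Adj a b → G2.Adj c d →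
      ((if (a,c) = (i,k) ∨ (a,c) = (j,l) then (1:K) else 0) *
       (if (b,d) = (i,k) ∨ (b,d) = (j,l) then (1:K) else 0)) = 0 := by
    intro a b c d ha hc
    rw [mul_eq_zero]
    by_contra hcon
    push_neg at hcon
    obtain ⟨h1, h2⟩ := hcon
    have e1 : (a,c) = (i,k) ∨ (a,c) = (j,l) := by
      by_contra h; exact h1 (if_neg h)
    have e2 : (b,d) = (i,k) ∨ (b,d) = (j,l) := by
      by_contra h; exact h2 (if_neg h)
    simp only [Prod.mk.injEq] at e1 e2
    rcases e1 with ⟨rfl, rfl⟩ | ⟨rfl, rfl⟩ <;> rcases e2 with ⟨rfl, rfl⟩ | ⟨rfl, rfl⟩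
    · exact ha.ne rfl
    · exact hne ⟨ha, hc⟩
    · exact hne ⟨ha.symm, hc.symm⟩
    · exact ha.ne rfl
  apply pairIdeal_le_ker
  intro a b c d ha hc
  rw [main a b c d ha hc, main a b d c ha hc.symm, sub_zero]

lemma X_not_mem (K : Type) [Field K] {α β : Type} (G1 : SimpleGraph α)
    (G2 : SimpleGraph β) (v : α × β) : X v ∉ pairIdeal K G1 G2 := by
  intro h
  have := pairIdeal_le_ker K G1 G2 (S := K) (fun _ => 1)
    (by intro _ _ _ _ _ _; ring) h
  rw [RingHom.mem_ker] at this
  simp at this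

lemma not_prime_1 (K : Type) [Field K] {α β : Type} [DecidableEq α] [DecidableEq β]
    (G1 : SimpleGraph α) (G2 : SimpleGraph β) {i t j : α} {k l : β}
    (h_it : G1.Adj i t) (h_tj : G1.Adj t j) (h_ij : ¬G1.Adj i j) (hij : i ≠ j)
    (hkl : G2.Adj k l) (hp : (pairIdeal K G1 G2).IsPrime) : False := by
  have hmul : X (t,l) * (X (i,k) * X (j,l) - X (i,l) * X (j,k)) ∈ pairIdeal K G1 G2 := by
    have g1 := gen_mem K G1 G2 h_it hkl
    have g2 := gen_mem K G1 G2 h_tj hkl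
    have e : (X (t,l) : MvPolynomial (α × β) K) * (X (i,k) * X (j,l) - X (i,l) * X (j,k)) =
        X (j,l) * (X (i,k) * X (t,l) - X (i,l) * X (t,k)) +
        X (i,l) * (X (t,k) * X (j,l) - X (t,l) * X (j,k)) := by ring
    rw [e]
    exact Ideal.add_mem _ (Ideal.mul_mem_left _ _ g1) (Ideal.mul_mem_left _ _ g2)
  rcases hp.mem_or_mem hmul with h | h
  · exact X_not_mem K G1 G2 _ h
  · have hker := indicator_ker K G1 G2 (i := i) (j := j) (k := k) (l := l)
      (fun ⟨h1, _⟩ => h_ij h1) h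
    rw [RingHom.mem_ker] at hker
    have hil : ¬((i,l) = (i,k) ∨ (i,l) = (j,l)) := by
      simp only [Prod.mk.injEq]
      push_neg
      exact ⟨fun _ => hkl.ne.symm, fun h' => absurd h' hij⟩
    rw [map_sub, map_mul, map_mul, aeval_X, aeval_X, aeval_X, aeval_X] at hker
    rw [if_pos (Or.inl rfl), if_pos (Or.inr rfl), if_neg hil] at hker
    simp at hker

lemma not_prime_2 (K : Type) [Field K] {α β : Type} [DecidableEq α] [DecidableEq β]
    (G1 : SimpleGraph α) (G2 : SimpleGraph β) {i j : α} {k s l : β}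
    (h_ks : G2.Adj k s) (h_sl : G2.Adj s l) (h_kl : ¬G2.Adj k l) (hkl : k ≠ l)
    (hij : G1.Adj i j) (hp : (pairIdeal K G1 G2).IsPrime) : False := by
  have hmul : X (j,s) * (X (i,k) * X (j,l) - X (i,l) * X (j,k)) ∈ pairIdeal K G1 G2 := by
    have g1 := gen_mem K G1 G2 hij h_ks
    have g2 := gen_mem K G1 G2 hij h_sl
    have e : (X (j,s) : MvPolynomial (α × β) K) * (X (i,k) * X (j,l) - X (i,l) * X (j,k)) =
        X (j,l) * (X (i,k) * X (j,s) - X (i,s) * X (j,k)) +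
        X (j,k) * (X (i,s) * X (j,l) - X (i,l) * X (j,s)) := by ring
    rw [e]
    exact Ideal.add_mem _ (Ideal.mul_mem_left _ _ g1) (Ideal.mul_mem_left _ _ g2)
  rcases hp.mem_or_mem hmul with h | h
  · exact X_not_mem K G1 G2 _ h
  · have hker := indicator_ker K G1 G2 (i := i) (j := j) (k := k) (l := l)
      (fun ⟨_, h2⟩ => h_kl h2) h
    rw [RingHom.mem_ker] at hker
    have hil : ¬((i,l) = (i,k) ∨ (i,l) = (j,l)) := by
      simp only [Prod.mk.injEq]
      push_neg
      exact ⟨fun _ => hkl.symm, fun h' => absurd h' hij.ne⟩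
    rw [map_sub, map_mul, map_mul, aeval_X, aeval_X, aeval_X, aeval_X] at hker
    rw [if_pos (Or.inl rfl), if_pos (Or.inr rfl), if_neg hil] at hker
    simp at hker


lemma exists_triple_aux {α : Type} (G : SimpleGraph α) :
    ∀ {u w : α}, G.Walk u w → u ≠ w → ¬G.Adj u w →
    ∃ i t j, G.Adj i t ∧ G.Adj t j ∧ ¬G.Adj i j ∧ i ≠ j := by
  intro u w p
  induction p with
  | nil => intro h _; exact absurd rfl h
  | @cons u v w huv p ih =>
    intro hne hna
    by_cases hvw : v = w
    · subst hvw; exact absurd huv hna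
    · by_cases hadj : G.Adj v w
      · exact ⟨u, v, w, huv, hadj, hna, hne⟩
      · exact ih hvw hadj

lemma exists_adj {α : Type} (G : SimpleGraph α) (h : G.Connected)
    {u w : α} (hne : u ≠ w) : ∃ a b, G.Adj a b := by
  obtain ⟨p⟩ := h.preconnected u w
  cases p with
  | nil => exact absurd rfl hne
  | cons h _ => exact ⟨_, _, h⟩

lemma exists_nonadj {α : Type} (G : SimpleGraph α) (h : G ≠ ⊤) :
    ∃ u w, u ≠ w ∧ ¬G.Adj u w := by
  by_contra hc
  push_neg at hc
  apply h
  ext a b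
  rw [SimpleGraph.top_adj]
  exact ⟨fun h' => h'.ne, fun h' => hc a b h'⟩


noncomputable def mprod (K : Type) [Field K] {σ : Type} (s : Multiset σ) :
    MvPolynomial σ K := (s.map X).prod

lemma mprod_cons (K : Type) [Field K] {σ : Type} (a : σ) (s : Multiset σ) :
    mprod K (a ::ₘ s) = X a * mprod K s := by
  simp [mprod]

lemma mprod_add (K : Type) [Field K] {σ : Type} (s t : Multiset σ) :
    mprod K (s + t) = mprod K s * mprod K t := by
  simp [mprod]

lemma mprod_toMultiset (K : Type) [Field K] {σ : Type} [DecidableEq σ] (d : σ →₀ ℕ) :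
    mprod K (Finsupp.toMultiset d) = monomial d 1 := by
  induction d using Finsupp.induction with
  | zero => simp [mprod]
  | single_add a b f _ _ ih =>
    rw [Finsupp.toMultiset_add, mprod_add, ih, Finsupp.toMultiset_single]
    have : mprod K (b • ({a} : Multiset σ)) = X a ^ b := by
      rw [mprod, Multiset.map_nsmul, Multiset.map_singleton, Multiset.nsmul_singleton,
        Multiset.prod_replicate]
    rw [this, X_pow_eq_monomial, monomial_mul, one_mul]

lemma minor_mem (K : Type) [Field K] {α β : Type} (i j : α) (k l : β) :
    X (i,k) * X (j,l) - X (i,l) * X (j,k) ∈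
      pairIdeal K (⊤ : SimpleGraph α) (⊤ : SimpleGraph β) := by
  by_cases hij : i = j
  · subst hij
    have : (X (i,k) * X (i,l) - X (i,l) * X (i,k) : MvPolynomial (α × β) K) = 0 := by ring
    rw [this]; exact Ideal.zero_mem _
  · by_cases hkl : k = l
    · subst hkl
      have : (X (i,k) * X (j,k) - X (i,k) * X (j,k) : MvPolynomial (α × β) K) = 0 := by ring
      rw [this]; exact Ideal.zero_mem _
    · exact gen_mem K _ _ ((SimpleGraph.top_adj i j).mpr hij) ((SimpleGraph.top_adj k l).mpr hkl)

lemma congr_mem (K : Type) [Field K] {α β : Type} [DecidableEq α] [DecidableEq β] :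
    ∀ (N : ℕ) (s t : Multiset (α × β)), Multiset.card s ≤ N →
    s.map Prod.fst = t.map Prod.fst → s.map Prod.snd = t.map Prod.snd →
    mprod K s - mprod K t ∈ pairIdeal K (⊤ : SimpleGraph α) (⊤ : SimpleGraph β) := by
  intro N
  induction N with
  | zero =>
    intro s t hc h1 h2
    have hs : s = 0 := Multiset.card_eq_zero.mp (Nat.le_zero.mp hc)
    subst hs
    have h0 : t.map Prod.fst = 0 := by rw [← h1]; simp
    have ht : t = 0 := Multiset.map_eq_zero.mp h0
    subst ht
    simp
  | succ N IH =>
    intro s t hc h1 h2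
    rcases Multiset.empty_or_exists_mem s with hs | ⟨⟨i, k⟩, ha⟩
    · subst hs
      have h0 : t.map Prod.fst = 0 := by rw [← h1]; simp
      have ht : t = 0 := Multiset.map_eq_zero.mp h0
      subst ht
      simp
    · have hs : s = (i,k) ::ₘ s.erase (i,k) := (Multiset.cons_erase ha).symm
      have hcard : Multiset.card (s.erase (i,k)) ≤ N := by
        have h' := Multiset.card_erase_of_mem ha
        have hpos : 0 < Multiset.card s := Multiset.card_pos.mpr
          (fun h0 => by simp [h0] at ha)
        rw [Nat.pred_eq_sub_one] at h'
        omega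
      have key : ∀ t' : Multiset (α × β), (i,k) ∈ t' →
          s.map Prod.fst = t'.map Prod.fst → s.map Prod.snd = t'.map Prod.snd →
          mprod K s - mprod K t' ∈ pairIdeal K (⊤ : SimpleGraph α) (⊤ : SimpleGraph β) := by
        intro t' hmem g1 g2
        have ht' : t' = (i,k) ::ₘ t'.erase (i,k) := (Multiset.cons_erase hmem).symm
        have g1' : (s.erase (i,k)).map Prod.fst = (t'.erase (i,k)).map Prod.fst := by
          have := g1
          rw [hs, ht', Multiset.map_cons, Multiset.map_cons] at this
          exact (Multiset.cons_inj_right _).mp this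
        have g2' : (s.erase (i,k)).map Prod.snd = (t'.erase (i,k)).map Prod.snd := by
          have := g2
          rw [hs, ht', Multiset.map_cons, Multiset.map_cons] at this
          exact (Multiset.cons_inj_right _).mp this
        have hin := IH (s.erase (i,k)) (t'.erase (i,k)) hcard g1' g2'
        rw [hs, ht', mprod_cons, mprod_cons]
        have e : X (i,k) * mprod K (s.erase (i,k)) - X (i,k) * mprod K (t'.erase (i,k)) =
            X (i,k) * (mprod K (s.erase (i,k)) - mprod K (t'.erase (i,k))) := by ring
        rw [e]
        exact Ideal.mul_mem_left _ _ hin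
      by_cases hmt : (i,k) ∈ t
      · exact key t hmt h1 h2
      · have hi : i ∈ t.map Prod.fst := h1 ▸ Multiset.mem_map.mpr ⟨(i,k), ha, rfl⟩
        have hk : k ∈ t.map Prod.snd := h2 ▸ Multiset.mem_map.mpr ⟨(i,k), ha, rfl⟩
        obtain ⟨p1, hp1t, hp1⟩ := Multiset.mem_map.mp hi
        obtain ⟨p2, hp2t, hp2⟩ := Multiset.mem_map.mp hk
        set l := p1.2 with hl
        set j := p2.1 with hj
        have hilt : (i, l) ∈ t := by
          have he : p1 = (i, l) := Prod.ext hp1 rfl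
          rwa [he] at hp1t
        have hjkt : (j, k) ∈ t := by
          have he : p2 = (j, k) := Prod.ext rfl hp2
          rwa [he] at hp2t
        have hlk : l ≠ k := fun h => hmt (h ▸ hilt)
        have hji : j ≠ i := fun h => hmt (h ▸ hjkt)
        have hm2 : (j,k) ∈ t.erase (i,l) :=
          (Multiset.mem_erase_of_ne (by simp [hji])).mpr hjkt
        set t₁ := (t.erase (i,l)).erase (j,k) with ht₁
        have ht : t = (i,l) ::ₘ (j,k) ::ₘ t₁ := by
          rw [ht₁, Multiset.cons_erase hm2, Multiset.cons_erase hilt]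
        have hc1 : ((i,k) ::ₘ (j,l) ::ₘ t₁).map Prod.fst = t.map Prod.fst := by
          rw [ht]; simp [Multiset.map_cons]
        have hc2 : ((i,k) ::ₘ (j,l) ::ₘ t₁).map Prod.snd = t.map Prod.snd := by
          rw [ht]; simp only [Multiset.map_cons]
          exact (Multiset.cons_swap _ _ _)
        have m1 := key ((i,k) ::ₘ (j,l) ::ₘ t₁) (Multiset.mem_cons_self _ _)
          (h1.trans hc1.symm) (h2.trans hc2.symm)
        have m2 : mprod K ((i,k) ::ₘ (j,l) ::ₘ t₁) - mprod K t ∈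
            pairIdeal K (⊤ : SimpleGraph α) (⊤ : SimpleGraph β) := by
          rw [ht, mprod_cons, mprod_cons, mprod_cons, mprod_cons]
          have e : X (i,k) * (X (j,l) * mprod K t₁) - X (i,l) * (X (j,k) * mprod K t₁) =
              (X (i,k) * X (j,l) - X (i,l) * X (j,k)) * mprod K t₁ := by ring
          rw [e]
          exact Ideal.mul_mem_right _ _ (minor_mem K i j k l)
        have := Ideal.add_mem _ m1 m2
        simpa using this


-- representative multiset with given row/column contents
noncomputable def rep {α β : Type} [LinearOrder α] [LinearOrder β]
    (u : Multiset α) (v : Multiset β) : Multiset (α × β) :=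
  ↑((u.sort (· ≤ ·)).zip (v.sort (· ≤ ·)))

lemma rep_fst {α β : Type} [LinearOrder α] [LinearOrder β]
    (u : Multiset α) (v : Multiset β) (h : Multiset.card u = Multiset.card v) :
    (rep u v).map Prod.fst = u := by
  rw [rep, Multiset.map_coe, List.map_fst_zip (l₁ := u.sort (· ≤ ·)) (l₂ := v.sort (· ≤ ·)) (by rw [Multiset.length_sort, Multiset.length_sort, h]),
    Multiset.sort_eq]

lemma rep_snd {α β : Type} [LinearOrder α] [LinearOrder β]
    (u : Multiset α) (v : Multiset β) (h : Multiset.card u = Multiset.card v) :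
    (rep u v).map Prod.snd = v := by
  rw [rep, Multiset.map_coe, List.map_snd_zip (l₁ := u.sort (· ≤ ·)) (l₂ := v.sort (· ≤ ·)) (by rw [Multiset.length_sort, Multiset.length_sort, h]),
    Multiset.sort_eq]

noncomputable def repF {α β : Type} [LinearOrder α] [LinearOrder β]
    (d : (α × β) →₀ ℕ) : (α × β) →₀ ℕ :=
  Multiset.toFinsupp (rep ((Finsupp.toMultiset d).map Prod.fst)
    ((Finsupp.toMultiset d).map Prod.snd))

noncomputable def rhoF {α β : Type} [DecidableEq α] [DecidableEq β]
    (d : (α × β) →₀ ℕ) : (α ⊕ β) →₀ ℕ :=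
  Multiset.toFinsupp ((Finsupp.toMultiset d).map (Sum.inl ∘ Prod.fst) +
    (Finsupp.toMultiset d).map (Sum.inr ∘ Prod.snd))

lemma sum_multiset_inj {α β : Type} [DecidableEq α] [DecidableEq β]
    {u u' : Multiset α} {v v' : Multiset β}
    (h : u.map Sum.inl + v.map Sum.inr = u'.map Sum.inl + v'.map (Sum.inr : β → α ⊕ β)) :
    u = u' ∧ v = v' := by
  constructor
  · rw [Multiset.ext]
    intro a
    have := congrArg (Multiset.count (Sum.inl a : α ⊕ β)) h
    rw [Multiset.count_add, Multiset.count_add,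
      Multiset.count_map_eq_count' _ _ (fun x y hxy => Sum.inl.inj hxy),
      Multiset.count_map_eq_count' _ _ (fun x y hxy => Sum.inl.inj hxy)] at this
    have hz : ∀ w : Multiset β, Multiset.count (Sum.inl a : α ⊕ β) (w.map Sum.inr) = 0 := by
      intro w
      rw [Multiset.count_eq_zero]
      simp
    rw [hz, hz] at this
    omega
  · rw [Multiset.ext]
    intro b
    have := congrArg (Multiset.count (Sum.inr b : α ⊕ β)) h
    rw [Multiset.count_add, Multiset.count_add,
      Multiset.count_map_eq_count' _ _ (fun x y hxy => Sum.inr.inj hxy),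
      Multiset.count_map_eq_count' _ _ (fun x y hxy => Sum.inr.inj hxy)] at this
    have hz : ∀ w : Multiset α, Multiset.count (Sum.inr b : α ⊕ β) (w.map Sum.inl) = 0 := by
      intro w
      rw [Multiset.count_eq_zero]
      simp
    rw [hz, hz] at this
    omega

lemma rhoF_eq_iff {α β : Type} [DecidableEq α] [DecidableEq β] (d d' : (α × β) →₀ ℕ) :
    rhoF d = rhoF d' ↔
      ((Finsupp.toMultiset d).map Prod.fst = (Finsupp.toMultiset d').map Prod.fst ∧
       (Finsupp.toMultiset d).map Prod.snd = (Finsupp.toMultiset d').map Prod.snd) := by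
  constructor
  · intro h
    have h2 := Multiset.toFinsupp.injective h
    have := sum_multiset_inj (u := (Finsupp.toMultiset d).map Prod.fst)
      (v := (Finsupp.toMultiset d).map Prod.snd)
      (u' := (Finsupp.toMultiset d').map Prod.fst)
      (v' := (Finsupp.toMultiset d').map Prod.snd)
      (by rw [Multiset.map_map, Multiset.map_map, Multiset.map_map, Multiset.map_map]; exact h2)
    exact this
  · intro ⟨ha, hb⟩
    rw [rhoF, rhoF, ← Multiset.map_map Sum.inl Prod.fst, ← Multiset.map_map Sum.inr Prod.snd,
      ← Multiset.map_map Sum.inl Prod.fst (Finsupp.toMultiset d'),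
      ← Multiset.map_map Sum.inr Prod.snd (Finsupp.toMultiset d'), ha, hb]

lemma repF_eq_iff {α β : Type} [LinearOrder α] [LinearOrder β] (d d' : (α × β) →₀ ℕ) :
    repF d = repF d' ↔
      ((Finsupp.toMultiset d).map Prod.fst = (Finsupp.toMultiset d').map Prod.fst ∧
       (Finsupp.toMultiset d).map Prod.snd = (Finsupp.toMultiset d').map Prod.snd) := by
  have hcard : ∀ e : (α × β) →₀ ℕ,
      Multiset.card ((Finsupp.toMultiset e).map Prod.fst) =
      Multiset.card ((Finsupp.toMultiset e).map Prod.snd) := by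
    intro e; simp
  constructor
  · intro h
    have h2 := Multiset.toFinsupp.injective h
    constructor
    · have := congrArg (Multiset.map Prod.fst) h2
      rwa [rep_fst _ _ (hcard d), rep_fst _ _ (hcard d')] at this
    · have := congrArg (Multiset.map Prod.snd) h2
      rwa [rep_snd _ _ (hcard d), rep_snd _ _ (hcard d')] at this
  · intro ⟨ha, hb⟩
    rw [repF, repF, ha, hb]

-- new material
noncomputable def segre (K : Type) [Field K] (α β : Type) :
    MvPolynomial (α × β) K →ₐ[K] MvPolynomial (α ⊕ β) K :=
  aeval (fun p : α × β => X (Sum.inl p.1) * X (Sum.inr p.2))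

lemma segre_mprod (K : Type) [Field K] {α β : Type} (s : Multiset (α × β)) :
    segre K α β (mprod K s) =
      mprod K (s.map (Sum.inl ∘ Prod.fst)) * mprod K (s.map (Sum.inr ∘ Prod.snd)) := by
  rw [mprod, map_multiset_prod, Multiset.map_map]
  have : (Multiset.map (⇑(segre K α β) ∘ X) s).prod =
      (Multiset.map (fun p : α × β => X (Sum.inl p.1) * X (Sum.inr p.2)) s).prod := by
    congr 1
    apply Multiset.map_congr rfl
    intro p _
    simp [segre]
  rw [this, Multiset.prod_map_mul, mprod, mprod, Multiset.map_map, Multiset.map_map]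
  rfl

lemma segre_monomial (K : Type) [Field K] {α β : Type} [DecidableEq α] [DecidableEq β]
    (d : (α × β) →₀ ℕ) (c : K) :
    segre K α β (monomial d c) = monomial (rhoF d) c := by
  have h1 : (monomial d c : MvPolynomial (α × β) K) = C c * monomial d 1 := by
    rw [C_mul_monomial, mul_one]
  have h2 : (monomial (rhoF d) c : MvPolynomial (α ⊕ β) K) = C c * monomial (rhoF d) 1 := by
    rw [C_mul_monomial, mul_one]
  rw [h1, h2, map_mul]
  congr 1
  · simp [segre, algebraMap_eq]
  · rw [← mprod_toMultiset, segre_mprod, ← mprod_add, ← mprod_toMultiset K (rhoF d)]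
    congr 1
    rw [rhoF, Multiset.toFinsupp_toMultiset]

lemma ker_le_pairIdeal (K : Type) [Field K] {α β : Type} [LinearOrder α] [LinearOrder β]
    (p : MvPolynomial (α × β) K) (hp : segre K α β p = 0) :
    p ∈ pairIdeal K (⊤ : SimpleGraph α) (⊤ : SimpleGraph β) := by
  classical
  set q : MvPolynomial (α × β) K :=
    ∑ d ∈ p.support, monomial (repF d) (coeff d p) with hqdef
  have hφ : (0 : MvPolynomial (α ⊕ β) K) =
      ∑ d ∈ p.support, monomial (rhoF d) (coeff d p) := by
    rw [← hp]
    conv_lhs => rw [p.as_sum]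
    rw [map_sum]
    exact Finset.sum_congr rfl (fun d _ => segre_monomial K d (coeff d p))
  have hq0 : q = 0 := by
    apply MvPolynomial.ext
    intro e
    rw [coeff_zero, hqdef, coeff_sum]
    by_cases hex : ∃ d₀ ∈ p.support, repF d₀ = e
    · obtain ⟨d₀, hd₀, hrepd₀⟩ := hex
      have hzero := congrArg (coeff (rhoF d₀)) hφ
      rw [coeff_zero, coeff_sum] at hzero
      rw [hzero]
      apply Finset.sum_congr rfl
      intro d _
      rw [coeff_monomial, coeff_monomial]
      apply if_congr _ rfl rfl
      rw [← hrepd₀, repF_eq_iff, ← rhoF_eq_iff]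
    · apply Finset.sum_eq_zero
      intro d hd
      rw [coeff_monomial, if_neg (fun h => hex ⟨d, hd, h⟩)]
  have hpq : p - q ∈ pairIdeal K (⊤ : SimpleGraph α) (⊤ : SimpleGraph β) := by
    have hps : p - q = ∑ d ∈ p.support,
        (monomial d (coeff d p) - monomial (repF d) (coeff d p)) := by
      rw [Finset.sum_sub_distrib, ← hqdef]
      congr 1
      exact p.as_sum
    rw [hps]
    apply Ideal.sum_mem
    intro d _
    have hterm : (monomial d (coeff d p) : MvPolynomial (α × β) K) -
        monomial (repF d) (coeff d p) =
        C (coeff d p) * (monomial d 1 - monomial (repF d) 1) := by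
      rw [mul_sub, C_mul_monomial, C_mul_monomial, mul_one]
    rw [hterm]
    apply Ideal.mul_mem_left
    rw [← mprod_toMultiset, ← mprod_toMultiset]
    have hcard : Multiset.card ((Finsupp.toMultiset d).map Prod.fst) =
        Multiset.card ((Finsupp.toMultiset d).map Prod.snd) := by simp
    apply congr_mem K (Multiset.card (Finsupp.toMultiset d)) _ _ le_rfl
    · rw [repF, Multiset.toFinsupp_toMultiset, rep_fst _ _ hcard]
    · rw [repF, Multiset.toFinsupp_toMultiset, rep_snd _ _ hcard]
  have : p = p - q := by rw [hq0, sub_zero]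
  rw [this]
  exact hpq

lemma top_top_prime (K : Type) [Field K] {α β : Type} [LinearOrder α] [LinearOrder β] :
    (pairIdeal K (⊤ : SimpleGraph α) (⊤ : SimpleGraph β)).IsPrime := by
  have heq : pairIdeal K (⊤ : SimpleGraph α) (⊤ : SimpleGraph β) =
      RingHom.ker (segre K α β) := by
    apply le_antisymm
    · exact pairIdeal_le_ker K _ _ _ (by intro i j k l _ _; ring)
    · intro p hp
      exact ker_le_pairIdeal K p hp
  rw [heq]
  exact RingHom.ker_isPrime _


/-- For connected graphs `G₁, G₂` (each with at least 2 vertices), `J_{G₁,G₂}` is a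
prime ideal if and only if both graphs are complete. -/
theorem stmt6 (K : Type) [Field K] (m n : ℕ) (hm : 2 ≤ m) (hn : 2 ≤ n)
    (G1 : SimpleGraph (Fin m)) (G2 : SimpleGraph (Fin n))
    (h1 : G1.Connected) (h2 : G2.Connected) :
    (pairIdeal K G1 G2).IsPrime ↔ (G1 = ⊤ ∧ G2 = ⊤) := by
  have hu1 : (⟨0, by omega⟩ : Fin m) ≠ ⟨1, by omega⟩ := by
    intro h; exact absurd (congrArg Fin.val h) (by norm_num)
  have hu2 : (⟨0, by omega⟩ : Fin n) ≠ ⟨1, by omega⟩ := by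
    intro h; exact absurd (congrArg Fin.val h) (by norm_num)
  constructor
  · intro hp
    obtain ⟨a1, b1, hab1⟩ := exists_adj G1 h1 hu1
    obtain ⟨a2, b2, hab2⟩ := exists_adj G2 h2 hu2
    constructor
    · by_contra hne
      obtain ⟨u, w, huw, hna⟩ := exists_nonadj G1 hne
      obtain ⟨p⟩ := h1.preconnected u w
      obtain ⟨i, t, j, h_it, h_tj, h_ij, hij⟩ := exists_triple_aux G1 p huw hna
      exact not_prime_1 K G1 G2 h_it h_tj h_ij hij hab2 hp
    · by_contra hne
      obtain ⟨u, w, huw, hna⟩ := exists_nonadj G2 hne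
      obtain ⟨p⟩ := h2.preconnected u w
      obtain ⟨k, s, l, h_ks, h_sl, h_kl, hkl⟩ := exists_triple_aux G2 p huw hna
      exact not_prime_2 K G1 G2 h_ks h_sl h_kl hkl hab1 hp
  · rintro ⟨rfl, rfl⟩
    exact top_top_prime K
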